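/- Let β(t) be the trajectory of the reparametrized gradient flow with initialization w_+(0) = w_−(0) = ω_0 where all entries of ω_0 are nonzero. Then for all t ≥ 0, β̇(t) = (2/n) √(β(t)^{⊙2} + ω_0^{⊙4}) ⊙ ( − Σ_{i=1}^n Σ_{l≠opt(i)} exp(−γ_i^⊤ S(g_i(β(t)))) (Σ(g_i(β(t))) γ_i)_l B_{il} ), where the square root is applied entrywise. -/

import Mathlib

open Real Filter Finset

noncomputable section

namespace AttnGF

/-- Softmax of a vector in `ℝ^L`. -/
def S {L : ℕ} (u : Fin L → ℝ) (l : Fin L) : ℝ := Real.exp (u l) / ∑ j, Real.exp (u j)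

/-- Euclidean norm of a vector. -/
def l2 {d : ℕ} (x : Fin d → ℝ) : ℝ := Real.sqrt (∑ j, x j ^ 2)

/-- ℓ1 norm of a vector. -/
def l1 {d : ℕ} (x : Fin d → ℝ) : ℝ := ∑ j, |x j|

variable {n L d de : ℕ}

/-- Token scores γ_{il} = y_i v^⊤ x_{il}. -/
def gam (X : Fin n → Fin L → Fin d → ℝ) (y : Fin n → ℝ) (v : Fin d → ℝ)
    (i : Fin n) (l : Fin L) : ℝ := y i * ∑ j, v j * X i l j

/-- g_i(β) = X_i (β ⊙ z_i) for the diagonal attention model. -/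
def gD (X : Fin n → Fin L → Fin d → ℝ) (z : Fin n → Fin d → ℝ) (i : Fin n)
    (β : Fin d → ℝ) (l : Fin L) : ℝ := ∑ j, X i l j * (β j * z i j)

/-- Empirical exponential loss for the diagonal attention model. -/
def lossD (X : Fin n → Fin L → Fin d → ℝ) (z : Fin n → Fin d → ℝ)
    (y : Fin n → ℝ) (v : Fin d → ℝ) (β : Fin d → ℝ) : ℝ :=
  (1 / (n : ℝ)) * ∑ i, Real.exp (-(∑ l, gam X y v i l * S (gD X z i β) l))

/-- Constraint vectors B_{il} = z_i ⊙ (x_{i,opt(i)} − x_{il}). -/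
def Bv (X : Fin n → Fin L → Fin d → ℝ) (z : Fin n → Fin d → ℝ)
    (opt : Fin n → Fin L) (i : Fin n) (l : Fin L) (j : Fin d) : ℝ :=
  z i j * (X i (opt i) j - X i l j)

/-- (Σ(u) γ)_l where Σ(u) = Diag(S(u)) − S(u) S(u)^⊤. -/
def SigMul {L : ℕ} (u γv : Fin L → ℝ) (l : Fin L) : ℝ :=
  S u l * γv l - S u l * ∑ j, S u j * γv j

/-- j-th component of the gradient (partial derivative) of f at x. -/
def pD {d : ℕ} (f : (Fin d → ℝ) → ℝ) (x : Fin d → ℝ) (j : Fin d) : ℝ :=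
  fderiv ℝ f x (Pi.single j 1)

/-- Assumption A1. -/
def A1 (X : Fin n → Fin L → Fin d → ℝ) (y : Fin n → ℝ) (v : Fin d → ℝ)
    (opt : Fin n → Fin L) (nopt : Fin n → ℝ) : Prop :=
  ∀ i : Fin n, ∀ l : Fin L, l ≠ opt i →
    gam X y v i l < gam X y v i (opt i) ∧ gam X y v i l = nopt i

/-- Feasibility for the ℓ1-SVM. -/
def Feas (X : Fin n → Fin L → Fin d → ℝ) (z : Fin n → Fin d → ℝ)
    (opt : Fin n → Fin L) (βf : Fin d → ℝ) : Prop :=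
  ∀ i : Fin n, ∀ l : Fin L, l ≠ opt i → 1 ≤ ∑ j, βf j * Bv X z opt i l j

/-- Reparametrized gradient flow on (w₊, w₋). -/
def Flow (X : Fin n → Fin L → Fin d → ℝ) (z : Fin n → Fin d → ℝ)
    (y : Fin n → ℝ) (v : Fin d → ℝ) (wp wm : ℝ → Fin d → ℝ) : Prop :=
  ∀ t : ℝ, 0 ≤ t → ∀ j : Fin d,
    HasDerivAt (fun s => wp s j)
      (-(pD (fun u => lossD X z y v (fun k => (u k ^ 2 - wm t k ^ 2) / 2)) (wp t) j)) t ∧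
    HasDerivAt (fun s => wm s j)
      (-(pD (fun u => lossD X z y v (fun k => (wp t k ^ 2 - u k ^ 2) / 2)) (wm t) j)) t

/-- β(t) = (w₊(t)^{⊙2} − w₋(t)^{⊙2})/2. -/
def bCurve (wp wm : ℝ → Fin d → ℝ) (t : ℝ) (j : Fin d) : ℝ :=
  (wp t j ^ 2 - wm t j ^ 2) / 2

/-- Assumption A2 (initial loss bound). -/
def A2 (X : Fin n → Fin L → Fin d → ℝ) (z : Fin n → Fin d → ℝ)
    (y : Fin n → ℝ) (v : Fin d → ℝ) (opt : Fin n → Fin L) (nopt : Fin n → ℝ)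
    (β0 : Fin d → ℝ) : Prop :=
  ∀ jj : Fin n, lossD X z y v β0 ≤
    (Real.exp (-(nopt jj)) +
      ∑ i ∈ Finset.univ.erase jj, Real.exp (-(gam X y v i (opt i)))) / (n : ℝ)

/-- Margin μ(β) = min_{i, l ≠ opt(i)} β^⊤ B_{il}. -/
def margin (X : Fin n → Fin L → Fin d → ℝ) (z : Fin n → Fin d → ℝ)
    (opt : Fin n → Fin L) (β : Fin d → ℝ) : ℝ :=
  sInf {m : ℝ | ∃ i : Fin n, ∃ l : Fin L, l ≠ opt i ∧ m = ∑ j, β j * Bv X z opt i l j}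

/-- φ_{il}(t). -/
def phi (X : Fin n → Fin L → Fin d → ℝ) (z : Fin n → Fin d → ℝ)
    (y : Fin n → ℝ) (v : Fin d → ℝ) (β : ℝ → Fin d → ℝ) (i : Fin n) (l : Fin L)
    (t : ℝ) : ℝ :=
  -(2 / (n : ℝ)) * ∫ τ in (0:ℝ)..t,
    Real.exp (-(∑ l', gam X y v i l' * S (gD X z i (β τ)) l')) *
      SigMul (gD X z i (β τ)) (gam X y v i) l

/-- Dual variables λ_{il}(t) = φ_{il}(t) / ln μ(β(t)). -/
def lam (X : Fin n → Fin L → Fin d → ℝ) (z : Fin n → Fin d → ℝ)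
    (y : Fin n → ℝ) (v : Fin d → ℝ) (opt : Fin n → Fin L) (β : ℝ → Fin d → ℝ)
    (i : Fin n) (l : Fin L) (t : ℝ) : ℝ :=
  (1 / Real.log (margin X z opt (β t))) * phi X z y v β i l t

/-- g_i(K,Q) = X_i K Q^⊤ z_i for the full attention model. -/
def gM (X : Fin n → Fin L → Fin d → ℝ) (z : Fin n → Fin d → ℝ) (i : Fin n)
    (K Q : Fin d → Fin de → ℝ) (l : Fin L) : ℝ :=
  ∑ a, ∑ b, ∑ c, X i l a * K a b * Q c b * z i c

/-- Empirical exponential loss for the full attention model. -/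
def lossM (X : Fin n → Fin L → Fin d → ℝ) (z : Fin n → Fin d → ℝ)
    (y : Fin n → ℝ) (v : Fin d → ℝ) (K Q : Fin d → Fin de → ℝ) : ℝ :=
  (1 / (n : ℝ)) * ∑ i, Real.exp (-(∑ l, gam X y v i l * S (gM X z i K Q) l))

/-- Partial derivative of f with respect to the (a,b) entry of a matrix. -/
def pDM {d de : ℕ} (f : (Fin d → Fin de → ℝ) → ℝ) (M : Fin d → Fin de → ℝ)
    (a : Fin d) (b : Fin de) : ℝ :=
  fderiv ℝ f M (Pi.single a (Pi.single b 1))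

/-- Gradient flow on the key and query matrices. -/
def MFlow (X : Fin n → Fin L → Fin d → ℝ) (z : Fin n → Fin d → ℝ)
    (y : Fin n → ℝ) (v : Fin d → ℝ) (K Q : ℝ → Fin d → Fin de → ℝ) : Prop :=
  ∀ t : ℝ, 0 ≤ t → ∀ (a : Fin d) (b : Fin de),
    HasDerivAt (fun s => K s a b) (-(pDM (fun M => lossM X z y v M (Q t)) (K t) a b)) t ∧
    HasDerivAt (fun s => Q s a b) (-(pDM (fun M => lossM X z y v (K t) M) (Q t) a b)) t

/-- A rectangular matrix is diagonal: zero off the main diagonal. -/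
def RectDiag {d de : ℕ} (M : Fin d → Fin de → ℝ) : Prop :=
  ∀ (a : Fin d) (b : Fin de), (a : ℕ) ≠ (b : ℕ) → M a b = 0

/-- Orthogonality: U^⊤ U = 1. -/
def Orth {d : ℕ} (U : Fin d → Fin d → ℝ) : Prop :=
  ∀ j j' : Fin d, ∑ a, U a j * U a j' = (if j = j' then (1:ℝ) else 0)

/-- Assumption B1, with the pairing of non-optimal tokens given by the involution σ. -/
def B1 (X : Fin n → Fin L → Fin d → ℝ) (z : Fin n → Fin d → ℝ)
    (opt : Fin n → Fin L) (σ : Fin n → Fin L → Fin L) : Prop :=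
  (∀ i j : Fin n, i ≠ j →
    (∑ a, X i (opt i) a * X j (opt j) a = 0) ∧ (∑ a, z i a * z j a = 0)) ∧
  (∀ i, |∑ a, X i (opt i) a * z i a| = l2 (X i (opt i)) * l2 (z i)) ∧
  (∀ i, ∀ l, l ≠ opt i → σ i l ≠ opt i ∧ σ i l ≠ l ∧ σ i (σ i l) = l ∧
    ∃ c : ℝ, -1 ≤ c ∧ c < 1 ∧
      (∑ a, X i (opt i) a * (X i l a - X i (σ i l) a)) = 0 ∧
      (∀ a, X i l a + X i (σ i l) a = 2 * c * X i (opt i) a))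

/-- Rotated constraint vectors B̃_{il}. -/
def Btil (X : Fin n → Fin L → Fin d → ℝ) (z : Fin n → Fin d → ℝ)
    (opt : Fin n → Fin L) (pim : Fin n → Fin d) (i : Fin n) (l : Fin L) (j : Fin d) : ℝ :=
  Real.sign (∑ a, X i (opt i) a * z i a) * (∑ a, (X i (opt i) a - X i l a) * z i a) *
    (if j = pim i then 1 else 0)

/-- Margin with respect to the rotated constraints. -/
def marginB (X : Fin n → Fin L → Fin d → ℝ) (z : Fin n → Fin d → ℝ)
    (opt : Fin n → Fin L) (pim : Fin n → Fin d) (β : Fin d → ℝ) : ℝ :=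
  sInf {m : ℝ | ∃ i : Fin n, ∃ l : Fin L, l ≠ opt i ∧ m = ∑ j, β j * Btil X z opt pim i l j}

/-- Margin for a combined attention weight matrix. -/
def marginM (X : Fin n → Fin L → Fin d → ℝ) (z : Fin n → Fin d → ℝ)
    (opt : Fin n → Fin L) (W : Fin d → Fin d → ℝ) : ℝ :=
  sInf {m : ℝ | ∃ i : Fin n, ∃ l : Fin L, l ≠ opt i ∧
    m = ∑ a, ∑ c, (X i (opt i) a - X i l a) * W a c * z i c}

/-- Nuclear norm ‖W‖_* = trace((W^⊤W)^{1/2}). -/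
def nuclear {d : ℕ} (W : Matrix (Fin d) (Fin d) ℝ) : ℝ :=
  (let hA := Matrix.posSemidef_conjTranspose_mul_self W
   hA.1.eigenvectorUnitary.1 *
     Matrix.diagonal ((RCLike.ofReal : ℝ → ℝ) ∘ (√·) ∘ hA.1.eigenvalues) *
     (star hA.1.eigenvectorUnitary : Matrix (Fin d) (Fin d) ℝ)).trace

end AttnGF

namespace AttnGF

variable {n L d : ℕ}

/-- Auxiliary gradient value. -/
def GG (X : Fin n → Fin L → Fin d → ℝ) (z : Fin n → Fin d → ℝ)
    (y : Fin n → ℝ) (v : Fin d → ℝ) (β : Fin d → ℝ) (j : Fin d) : ℝ :=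
  (1 / (n : ℝ)) * ∑ i, Real.exp (-(∑ l, gam X y v i l * S (gD X z i β) l)) *
    (-(∑ l, SigMul (gD X z i β) (gam X y v i) l * (X i l j * z i j)))

theorem lossD_hasGrad (X : Fin n → Fin L → Fin d → ℝ) (z : Fin n → Fin d → ℝ)
    (y : Fin n → ℝ) (v : Fin d → ℝ) (β : Fin d → ℝ) :
    ∃ Lc : (Fin d → ℝ) →L[ℝ] ℝ, HasFDerivAt (lossD X z y v) Lc β ∧
      ∀ j, Lc (Pi.single j 1) = GG X z y v β j := by
  rcases Nat.eq_zero_or_pos L with hL | hL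
  · subst hL
    refine ⟨0, ?_, fun j => by simp [GG]⟩
    have h : lossD X z y v = fun _ : Fin d → ℝ => (1 / (n : ℝ)) * ∑ i : Fin n, Real.exp (-(0:ℝ)) := by
      funext β; simp [lossD]
    rw [h]
    exact hasFDerivAt_const _ _
  · have key : ∀ i : Fin n, ∃ Li : (Fin d → ℝ) →L[ℝ] ℝ,
        HasFDerivAt (fun β => Real.exp (-(∑ l, gam X y v i l * S (gD X z i β) l))) Li β ∧
        ∀ j, Li (Pi.single j 1) =
          Real.exp (-(∑ l, gam X y v i l * S (gD X z i β) l)) *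
            (-(∑ l, SigMul (gD X z i β) (gam X y v i) l * (X i l j * z i j))) := by
      intro i
      have hne : (Finset.univ : Finset (Fin L)).Nonempty := ⟨⟨0,hL⟩, Finset.mem_univ _⟩
      have hg : ∀ (l : Fin L), HasFDerivAt (fun β : Fin d → ℝ => gD X z i β l)
          (∑ j, (X i l j * z i j) • (ContinuousLinearMap.proj j : (Fin d → ℝ) →L[ℝ] ℝ)) β := by
        intro l
        have h : (fun β : Fin d → ℝ => gD X z i β l) = fun β => ∑ j, (X i l j * z i j) * β j := by
          funext β; exact Finset.sum_congr rfl fun j _ => by ring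
        rw [h]
        exact HasFDerivAt.fun_sum fun j _ =>
          ((ContinuousLinearMap.proj j : (Fin d → ℝ) →L[ℝ] ℝ).hasFDerivAt.const_mul _)
      have hDpos : (0:ℝ) < ∑ l, Real.exp (gD X z i β l) :=
        Finset.sum_pos (fun l _ => Real.exp_pos _) hne
      have hN := HasFDerivAt.fun_sum (fun l (_ : l ∈ Finset.univ) =>
        ((hg l).exp.const_mul (gam X y v i l)))
      have hDD := HasFDerivAt.fun_sum (fun l (_ : l ∈ Finset.univ) => (hg l).exp)
      have hinv := ((hasFDerivAt_inv' (ne_of_gt hDpos)).comp β hDD)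
      have hF := hN.mul hinv
      have hE := hF.neg.exp
      have hsc : ∀ β : Fin d → ℝ, (∑ l, gam X y v i l * S (gD X z i β) l)
          = (∑ l, gam X y v i l * Real.exp (gD X z i β l)) *
              (∑ l, Real.exp (gD X z i β l))⁻¹ := by
        intro β
        rw [Finset.sum_mul]
        refine Finset.sum_congr rfl fun l _ => ?_
        simp [S, div_eq_mul_inv]; ring
      have hfun : (fun β => Real.exp (-(∑ l, gam X y v i l * S (gD X z i β) l)))
          = fun β => Real.exp (-((∑ l, gam X y v i l * Real.exp (gD X z i β l)) *
              (∑ l, Real.exp (gD X z i β l))⁻¹)) := by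
        funext β; rw [hsc]
      refine ⟨_, by rw [hfun]; exact hE, ?_⟩
      intro j
      rw [hsc]
      simp only [ContinuousLinearMap.smul_apply, ContinuousLinearMap.comp_apply,
        ContinuousLinearMap.neg_apply, ContinuousLinearMap.add_apply,
        ContinuousLinearMap.sum_apply, ContinuousLinearMap.proj_apply,
        ContinuousLinearMap.mulLeftRight_apply, smul_eq_mul]
      simp only [Pi.single_apply, mul_ite, mul_one, mul_zero, Finset.sum_ite_eq',
        Finset.mem_univ, if_true, Function.comp_apply]
      have hin : (∑ j', S (gD X z i β) j' * gam X y v i j')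
          = (∑ l, gam X y v i l * Real.exp (gD X z i β l)) * (∑ l, Real.exp (gD X z i β l))⁻¹ := by
        rw [Finset.sum_mul]
        refine Finset.sum_congr rfl fun l _ => ?_
        simp [S, div_eq_mul_inv]; ring
      have hsig : (∑ l, SigMul (gD X z i β) (gam X y v i) l * (X i l j * z i j))
          = (∑ l, gam X y v i l * (Real.exp (gD X z i β l) * (X i l j * z i j)))
              * (∑ l, Real.exp (gD X z i β l))⁻¹
            - (∑ l, Real.exp (gD X z i β l) * (X i l j * z i j))
              * ((∑ l, gam X y v i l * Real.exp (gD X z i β l))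
                 * ((∑ l, Real.exp (gD X z i β l))⁻¹ * (∑ l, Real.exp (gD X z i β l))⁻¹)) := by
        rw [Finset.sum_mul, Finset.sum_mul, ← Finset.sum_sub_distrib]
        refine Finset.sum_congr rfl fun l _ => ?_
        rw [SigMul, hin]
        simp only [S, div_eq_mul_inv]
        ring
      rw [hsig]; simp only [Pi.neg_apply, Pi.mul_apply, Function.comp_apply]; ring
    choose Li hLi hval using key
    refine ⟨(1/(n:ℝ)) • ∑ i, Li i, ?_, ?_⟩
    · exact (HasFDerivAt.fun_sum (fun i (_ : i ∈ Finset.univ) => hLi i)).const_mul (1/(n:ℝ))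
    · intro j
      simp only [ContinuousLinearMap.smul_apply, ContinuousLinearMap.sum_apply, smul_eq_mul, GG]
      congr 1
      exact Finset.sum_congr rfl fun i _ => hval i j

theorem sum_SigMul_Bv (X : Fin n → Fin L → Fin d → ℝ) (z : Fin n → Fin d → ℝ)
    (y : Fin n → ℝ) (v : Fin d → ℝ) (opt : Fin n → Fin L) (β : Fin d → ℝ)
    (i : Fin n) (j : Fin d) :
    (∑ l ∈ Finset.univ.erase (opt i), SigMul (gD X z i β) (gam X y v i) l * Bv X z opt i l j)
      = -(∑ l, SigMul (gD X z i β) (gam X y v i) l * (X i l j * z i j)) := by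
  rcases Nat.eq_zero_or_pos L with hL | hL
  · subst hL; exact (opt i).elim0
  · have hne : (Finset.univ : Finset (Fin L)).Nonempty := ⟨⟨0,hL⟩, Finset.mem_univ _⟩
    have hDpos : (0:ℝ) < ∑ l, Real.exp (gD X z i β l) :=
      Finset.sum_pos (fun l _ => Real.exp_pos _) hne
    have hSsum : (∑ l, S (gD X z i β) l) = 1 := by
      rw [show (∑ l, S (gD X z i β) l)
          = (∑ l, Real.exp (gD X z i β l)) / (∑ l, Real.exp (gD X z i β l)) from ?_]
      · exact div_self (ne_of_gt hDpos)
      · rw [Finset.sum_div]; rfl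
    have hzero : (∑ l, SigMul (gD X z i β) (gam X y v i) l) = 0 := by
      simp only [SigMul]
      rw [Finset.sum_sub_distrib, ← Finset.sum_mul, hSsum, one_mul]
      rw [show (∑ l, S (gD X z i β) l * gam X y v i l)
          = (∑ l', S (gD X z i β) l' * gam X y v i l') from rfl, sub_self]
    rw [Finset.sum_erase _ (by simp [Bv])]
    calc (∑ l, SigMul (gD X z i β) (gam X y v i) l * Bv X z opt i l j)
        = ∑ l, (SigMul (gD X z i β) (gam X y v i) l * (z i j * X i (opt i) j)
            - SigMul (gD X z i β) (gam X y v i) l * (X i l j * z i j)) :=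
          Finset.sum_congr rfl fun l _ => by rw [Bv]; ring
      _ = (∑ l, SigMul (gD X z i β) (gam X y v i) l) * (z i j * X i (opt i) j)
            - ∑ l, SigMul (gD X z i β) (gam X y v i) l * (X i l j * z i j) := by
          rw [Finset.sum_sub_distrib, Finset.sum_mul]
      _ = -(∑ l, SigMul (gD X z i β) (gam X y v i) l * (X i l j * z i j)) := by
          rw [hzero]; ring
theorem flow_deriv (X : Fin n → Fin L → Fin d → ℝ) (z : Fin n → Fin d → ℝ)
    (y : Fin n → ℝ) (v : Fin d → ℝ) (wp wm : ℝ → Fin d → ℝ)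
    (hflow : Flow X z y v wp wm) (s : ℝ) (hs : 0 ≤ s) (j : Fin d) :
    HasDerivAt (fun r => wp r j) (-(wp s j * GG X z y v (bCurve wp wm s) j)) s ∧
    HasDerivAt (fun r => wm r j) (wm s j * GG X z y v (bCurve wp wm s) j) s := by
  obtain ⟨Lc, hLc, hval⟩ := lossD_hasGrad X z y v (bCurve wp wm s)
  -- plus direction
  have hPp : HasFDerivAt (fun (u : Fin d → ℝ) (k : Fin d) => (u k ^ 2 - wm s k ^ 2) / 2)
      (ContinuousLinearMap.pi fun k =>
        wp s k • (ContinuousLinearMap.proj k : (Fin d → ℝ) →L[ℝ] ℝ)) (wp s) := by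
    apply hasFDerivAt_pi.2
    intro k
    have hb : HasFDerivAt (fun u : Fin d → ℝ => u k)
        (ContinuousLinearMap.proj k : (Fin d → ℝ) →L[ℝ] ℝ) (wp s) := hasFDerivAt_apply k (wp s)
    have h1 := ((hb.mul hb).sub_const (wm s k ^ 2)).const_mul ((2:ℝ)⁻¹)
    refine (h1.congr_fderiv ?_).congr_of_eventuallyEq (Filter.Eventually.of_forall fun u => ?_)
    · refine ContinuousLinearMap.ext fun u => ?_
      simp only [ContinuousLinearMap.comp_apply, ContinuousLinearMap.pi_apply,
          ContinuousLinearMap.smul_apply, ContinuousLinearMap.add_apply,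
          ContinuousLinearMap.neg_apply, ContinuousLinearMap.proj_apply, smul_eq_mul]
      ring
    · simp only [Pi.mul_apply]; ring
  have hLc' : HasFDerivAt (lossD X z y v)
      Lc ((fun (u : Fin d → ℝ) (k : Fin d) => (u k ^ 2 - wm s k ^ 2) / 2) (wp s)) := hLc
  have hcompp : HasFDerivAt
      (fun u : Fin d → ℝ => lossD X z y v (fun k => (u k ^ 2 - wm s k ^ 2) / 2))
      (Lc.comp (ContinuousLinearMap.pi fun k =>
        wp s k • (ContinuousLinearMap.proj k : (Fin d → ℝ) →L[ℝ] ℝ))) (wp s) :=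
    (HasFDerivAt.comp (wp s) hLc' hPp :)
  have hvecp : (ContinuousLinearMap.pi fun k =>
      wp s k • (ContinuousLinearMap.proj k : (Fin d → ℝ) →L[ℝ] ℝ)) (Pi.single j 1)
      = wp s j • (Pi.single j 1 : Fin d → ℝ) := by
    funext k
    by_cases h : k = j <;> simp [Pi.single_apply, h]
  have hpdp : pD (fun u => lossD X z y v (fun k => (u k ^ 2 - wm s k ^ 2) / 2)) (wp s) j
      = wp s j * GG X z y v (bCurve wp wm s) j := by
    rw [pD, hcompp.fderiv, ContinuousLinearMap.comp_apply, hvecp, map_smul, smul_eq_mul, hval j]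
  -- minus direction
  have hPm : HasFDerivAt (fun (u : Fin d → ℝ) (k : Fin d) => (wp s k ^ 2 - u k ^ 2) / 2)
      (ContinuousLinearMap.pi fun k =>
        (-(wm s k)) • (ContinuousLinearMap.proj k : (Fin d → ℝ) →L[ℝ] ℝ)) (wm s) := by
    apply hasFDerivAt_pi.2
    intro k
    have hb : HasFDerivAt (fun u : Fin d → ℝ => u k)
        (ContinuousLinearMap.proj k : (Fin d → ℝ) →L[ℝ] ℝ) (wm s) := hasFDerivAt_apply k (wm s)
    have h1 := ((hb.mul hb).const_sub (wp s k ^ 2)).const_mul ((2:ℝ)⁻¹)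
    refine (h1.congr_fderiv ?_).congr_of_eventuallyEq (Filter.Eventually.of_forall fun u => ?_)
    · refine ContinuousLinearMap.ext fun u => ?_
      simp only [ContinuousLinearMap.comp_apply, ContinuousLinearMap.pi_apply,
          ContinuousLinearMap.smul_apply, ContinuousLinearMap.add_apply,
          ContinuousLinearMap.neg_apply, ContinuousLinearMap.proj_apply, smul_eq_mul]
      ring
    · simp only [Pi.mul_apply]; ring
  have hLc'' : HasFDerivAt (lossD X z y v)
      Lc ((fun (u : Fin d → ℝ) (k : Fin d) => (wp s k ^ 2 - u k ^ 2) / 2) (wm s)) := hLc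
  have hcompm : HasFDerivAt
      (fun u : Fin d → ℝ => lossD X z y v (fun k => (wp s k ^ 2 - u k ^ 2) / 2))
      (Lc.comp (ContinuousLinearMap.pi fun k =>
        (-(wm s k)) • (ContinuousLinearMap.proj k : (Fin d → ℝ) →L[ℝ] ℝ))) (wm s) :=
    (HasFDerivAt.comp (wm s) hLc'' hPm :)
  have hvecm : (ContinuousLinearMap.pi fun k =>
      (-(wm s k)) • (ContinuousLinearMap.proj k : (Fin d → ℝ) →L[ℝ] ℝ)) (Pi.single j 1)
      = (-(wm s j)) • (Pi.single j 1 : Fin d → ℝ) := by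
    funext k
    by_cases h : k = j <;> simp [Pi.single_apply, h]
  have hpdm : pD (fun u => lossD X z y v (fun k => (wp s k ^ 2 - u k ^ 2) / 2)) (wm s) j
      = -(wm s j) * GG X z y v (bCurve wp wm s) j := by
    rw [pD, hcompm.fderiv, ContinuousLinearMap.comp_apply, hvecm, map_smul, smul_eq_mul, hval j]
  constructor
  · have h := (hflow s hs j).1
    rw [hpdp] at h
    exact h
  · have h := (hflow s hs j).2
    rw [hpdm] at h
    convert h using 1
    ring

/-- the derivative formula for β(t) along the reparametrized flow. -/
theorem statement7 {n L d : ℕ}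
    (X : Fin n → Fin L → Fin d → ℝ) (z : Fin n → Fin d → ℝ)
    (y : Fin n → ℝ) (v : Fin d → ℝ)
    (opt : Fin n → Fin L)
    (hopt : ∀ i : Fin n, ∀ l : Fin L, l ≠ opt i → gam X y v i l < gam X y v i (opt i))
    (wp wm : ℝ → Fin d → ℝ) (hflow : Flow X z y v wp wm)
    (ω0 : Fin d → ℝ) (hω : ∀ j, ω0 j ≠ 0)
    (hip : wp 0 = ω0) (him : wm 0 = ω0) :
    ∀ t : ℝ, 0 ≤ t → ∀ j : Fin d,
      HasDerivAt (fun s => bCurve wp wm s j)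
        ((2 / (n : ℝ)) * Real.sqrt (bCurve wp wm t j ^ 2 + ω0 j ^ 4) *
          (-(∑ i : Fin n, ∑ l ∈ Finset.univ.erase (opt i),
            Real.exp (-(∑ l', gam X y v i l' * S (gD X z i (bCurve wp wm t)) l')) *
              SigMul (gD X z i (bCurve wp wm t)) (gam X y v i) l *
                Bv X z opt i l j))) t := by
  intro t ht j
  have hq : ∀ s ∈ Set.Icc (0:ℝ) t, wp s j * wm s j = wp 0 j * wm 0 j := by
    have hcont : ContinuousOn (fun r => wp r j * wm r j) (Set.Icc 0 t) := fun s hs =>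
      (((flow_deriv X z y v wp wm hflow s hs.1 j).1.mul
        (flow_deriv X z y v wp wm hflow s hs.1 j).2).continuousAt).continuousWithinAt
    have hder : ∀ s ∈ Set.Ico (0:ℝ) t,
        HasDerivWithinAt (fun r => wp r j * wm r j) 0 (Set.Ici s) s := by
      intro s hs
      obtain ⟨h1, h2⟩ := flow_deriv X z y v wp wm hflow s hs.1 j
      have hmul := h1.mul h2
      have heq : -(wp s j * GG X z y v (bCurve wp wm s) j) * wm s j
          + wp s j * (wm s j * GG X z y v (bCurve wp wm s) j) = 0 := by ring
      rw [heq] at hmul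
      exact hmul.hasDerivWithinAt
    exact fun s hs => constant_of_has_deriv_right_zero hcont hder s hs
  have hq0 : wp t j * wm t j = ω0 j * ω0 j := by
    have h := hq t (Set.right_mem_Icc.2 ht)
    rw [h, hip, him]
  have hsqrt : Real.sqrt (bCurve wp wm t j ^ 2 + ω0 j ^ 4) = (wp t j ^ 2 + wm t j ^ 2) / 2 := by
    have h4 : bCurve wp wm t j ^ 2 + ω0 j ^ 4 = ((wp t j ^ 2 + wm t j ^ 2) / 2) ^ 2 := by
      have ho : ω0 j ^ 4 = (wp t j * wm t j) ^ 2 := by rw [hq0]; ring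
      rw [ho, bCurve]; ring
    rw [h4, Real.sqrt_sq (by positivity)]
  obtain ⟨h1, h2⟩ := flow_deriv X z y v wp wm hflow t ht j
  have hb := ((h1.mul h1).sub (h2.mul h2)).const_mul ((2:ℝ)⁻¹)
  have hSig : (∑ i : Fin n, ∑ l ∈ Finset.univ.erase (opt i),
        Real.exp (-(∑ l', gam X y v i l' * S (gD X z i (bCurve wp wm t)) l')) *
          SigMul (gD X z i (bCurve wp wm t)) (gam X y v i) l * Bv X z opt i l j)
      = ∑ i : Fin n, Real.exp (-(∑ l, gam X y v i l * S (gD X z i (bCurve wp wm t)) l)) *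
          (-(∑ l, SigMul (gD X z i (bCurve wp wm t)) (gam X y v i) l * (X i l j * z i j))) := by
    refine Finset.sum_congr rfl fun i _ => ?_
    rw [← sum_SigMul_Bv X z y v opt (bCurve wp wm t) i j, Finset.mul_sum]
    exact Finset.sum_congr rfl fun l _ => by ring
  refine (hb.congr_deriv ?_).congr_of_eventuallyEq (Filter.Eventually.of_forall fun s => ?_)
  · rw [hsqrt, hSig, GG]
    ring
  · simp only [bCurve, Pi.mul_apply, Pi.sub_apply, Pi.pow_apply]; ring


end AttnGF
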